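/- Let d ≥ 1, let Λ be a finitely generated additive submonoid of (Fin d → ℕ), and let n : Fin d → ℕ satisfy ⟨n,u⟩ > 0 for every u ∈ Λ with u ≠ 0. Then the associated graded ring gr(R_Λ) := ⨁_{k ∈ ℕ} p_k / p_{k+1}, with multiplication induced by that of R_Λ, is isomorphic as a graded ℂ-algebra to AddMonoidAlgebra ℂ Λ equipped with the grading whose k-th piece is H_k = span{X^u | u ∈ Λ, ⟨n,u⟩ = k}; moreover this isomorphism carries the maximal graded ideal ⨁_{k ≥ 1} p_k / p_{k+1} onto the maximal graded ideal 𝔪_Λ spanned by the monomials X^u with u ∈ Λ, u ≠ 0. -/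

import Mathlib

noncomputable section

/-- Coefficient of a multivariate power series at an exponent `u : Fin d → ℕ`. -/
def coeffFun (d : ℕ) (φ : MvPowerSeries (Fin d) ℂ) (u : Fin d → ℕ) : ℂ :=
  MvPowerSeries.coeff (R := ℂ) (Finsupp.equivFunOnFinite.symm u) φ

/-- Support of a multivariate power series, as a set of exponents `u : Fin d → ℕ`. -/
def suppS (d : ℕ) (φ : MvPowerSeries (Fin d) ℂ) : Set (Fin d → ℕ) :=
  {u | coeffFun d φ u ≠ 0}

/-- The weight `⟨n,u⟩ = ∑ i, n i * u i`. -/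
def wt {d : ℕ} (n u : Fin d → ℕ) : ℕ := ∑ i, n i * u i

/-- The `n`-weighted order of a power series: the least weight of an exponent
in its support (junk value `0` for `φ = 0`, by `Nat.sInf_empty`). -/
def ordn (d : ℕ) (n : Fin d → ℕ) (φ : MvPowerSeries (Fin d) ℂ) : ℕ :=
  sInf (wt n '' suppS d φ)

lemma suppS_add (d : ℕ) (φ ψ : MvPowerSeries (Fin d) ℂ) :
    suppS d (φ + ψ) ⊆ suppS d φ ∪ suppS d ψ := by
  intro u hu
  by_contra h
  simp only [Set.mem_union, suppS, Set.mem_setOf_eq, not_or, not_not] at h hu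
  apply hu
  show coeffFun d (φ + ψ) u = 0
  have : coeffFun d (φ + ψ) u = coeffFun d φ u + coeffFun d ψ u := by
    simp [coeffFun, map_add]
  rw [this, h.1, h.2, add_zero]

/-- `ℂ[[Λ]]`: the subalgebra of `MvPowerSeries (Fin d) ℂ` of series with support
contained in the additive submonoid `Λ`; it is the analytic algebra of the germ
of the affine toric variety `Z^Λ = Spec ℂ[Λ]` at its zero-dimensional orbit. -/
def RL (d : ℕ) (Λ : AddSubmonoid (Fin d → ℕ)) : Subalgebra ℂ (MvPowerSeries (Fin d) ℂ) where
  carrier := {φ | suppS d φ ⊆ (Λ : Set (Fin d → ℕ))}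
  zero_mem' := by
    intro u hu
    exact absurd (by simp [coeffFun]) hu
  one_mem' := by
    intro u hu
    have h : coeffFun d 1 u ≠ 0 := hu
    rw [coeffFun, MvPowerSeries.coeff_one] at h
    have : Finsupp.equivFunOnFinite.symm u = 0 := by
      by_contra hne; exact h (if_neg hne)
    have hu0 : u = 0 := by
      have := congrArg Finsupp.equivFunOnFinite this
      rw [Equiv.apply_symm_apply] at this
      exact this
    rw [hu0]; exact Λ.zero_mem
  add_mem' := by
    intro φ ψ hφ hψ u hu
    rcases suppS_add d φ ψ hu with h | h
    · exact hφ h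
    · exact hψ h
  mul_mem' := by
    intro φ ψ hφ hψ u hu
    have h : coeffFun d (φ * ψ) u ≠ 0 := hu
    rw [coeffFun, MvPowerSeries.coeff_mul] at h
    obtain ⟨p, hp, hne⟩ := Finset.exists_ne_zero_of_sum_ne_zero h
    rw [Finset.HasAntidiagonal.mem_antidiagonal] at hp
    have h1 : Finsupp.equivFunOnFinite p.1 ∈ Λ := by
      apply hφ
      show coeffFun d φ _ ≠ 0
      rw [coeffFun, Equiv.symm_apply_apply]
      exact left_ne_zero_of_mul hne
    have h2 : Finsupp.equivFunOnFinite p.2 ∈ Λ := by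
      apply hψ
      show coeffFun d ψ _ ≠ 0
      rw [coeffFun, Equiv.symm_apply_apply]
      exact right_ne_zero_of_mul hne
    have hsum : Finsupp.equivFunOnFinite p.1 + Finsupp.equivFunOnFinite p.2 = u := by
      have := congrArg Finsupp.equivFunOnFinite hp
      rw [Equiv.apply_symm_apply] at this
      rw [← this]
      exact (Finsupp.coe_add p.1 p.2).symm
    rw [← hsum]
    exact Λ.add_mem h1 h2
  algebraMap_mem' := by
    intro c u hu
    have h : coeffFun d (algebraMap ℂ (MvPowerSeries (Fin d) ℂ) c) u ≠ 0 := hu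
    rw [coeffFun] at h
    rw [show (algebraMap ℂ (MvPowerSeries (Fin d) ℂ) c) = MvPowerSeries.C (σ := Fin d) (R := ℂ) c from rfl,
      MvPowerSeries.coeff_C] at h
    have : Finsupp.equivFunOnFinite.symm u = 0 := by
      by_contra hne; exact h (if_neg hne)
    have hu0 : u = 0 := by
      have := congrArg Finsupp.equivFunOnFinite this
      rw [Equiv.apply_symm_apply] at this
      exact this
    rw [hu0]; exact Λ.zero_mem

lemma suppS_nonempty (d : ℕ) (φ : MvPowerSeries (Fin d) ℂ) (hφ : φ ≠ 0) :
    (suppS d φ).Nonempty := by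
  have : ∃ v : Fin d →₀ ℕ, MvPowerSeries.coeff (R := ℂ) v φ ≠ 0 := by
    by_contra h
    push_neg at h
    exact hφ (MvPowerSeries.ext h)
  obtain ⟨v, hv⟩ := this
  refine ⟨Finsupp.equivFunOnFinite v, ?_⟩
  show coeffFun d φ _ ≠ 0
  rw [coeffFun, Equiv.symm_apply_apply]
  exact hv

lemma ordn_le (d : ℕ) (n : Fin d → ℕ) (φ : MvPowerSeries (Fin d) ℂ) (u : Fin d → ℕ)
    (hu : u ∈ suppS d φ) : ordn d n φ ≤ wt n u :=
  Nat.sInf_le ⟨u, hu, rfl⟩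

lemma le_ordn (d : ℕ) (n : Fin d → ℕ) (φ : MvPowerSeries (Fin d) ℂ) (k : ℕ) (hφ : φ ≠ 0)
    (h : ∀ u ∈ suppS d φ, k ≤ wt n u) : k ≤ ordn d n φ := by
  apply le_csInf
  · exact (suppS_nonempty d φ hφ).image _
  · rintro b ⟨u, hu, rfl⟩
    exact h u hu

lemma suppS_smul (d : ℕ) (c : ℂ) (φ : MvPowerSeries (Fin d) ℂ) :
    suppS d (c • φ) ⊆ suppS d φ := by
  intro u hu
  have h : coeffFun d (c • φ) u ≠ 0 := hu
  have : coeffFun d (c • φ) u = c * coeffFun d φ u := by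
    simp [coeffFun]
  rw [this] at h
  exact right_ne_zero_of_mul h

/-- The `k`-th step `p_k = {φ ∈ R | φ = 0 ∨ ord_n φ ≥ k}` of the filtration of a
subalgebra `R` of the power series ring induced by the `n`-weighted order,
as a `ℂ`-submodule of the power series ring. -/
def pP (d : ℕ) (R : Subalgebra ℂ (MvPowerSeries (Fin d) ℂ)) (n : Fin d → ℕ) (k : ℕ) :
    Submodule ℂ (MvPowerSeries (Fin d) ℂ) where
  carrier := {φ | φ ∈ R ∧ (φ = 0 ∨ k ≤ ordn d n φ)}
  zero_mem' := ⟨R.zero_mem, Or.inl rfl⟩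
  add_mem' := by
    rintro φ ψ ⟨hφR, hφ⟩ ⟨hψR, hψ⟩
    refine ⟨R.add_mem hφR hψR, ?_⟩
    by_cases h0 : φ + ψ = 0
    · exact Or.inl h0
    · refine Or.inr (le_ordn d n _ k h0 ?_)
      intro u hu
      rcases suppS_add d φ ψ hu with h | h
      · rcases hφ with h1 | h1
        · exact absurd h (by simp [h1, suppS, coeffFun])
        · exact le_trans h1 (ordn_le d n φ u h)
      · rcases hψ with h1 | h1
        · exact absurd h (by simp [h1, suppS, coeffFun])
        · exact le_trans h1 (ordn_le d n ψ u h)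
  smul_mem' := by
    rintro c φ ⟨hφR, hφ⟩
    refine ⟨R.smul_mem hφR c, ?_⟩
    by_cases h0 : c • φ = 0
    · exact Or.inl h0
    · refine Or.inr ?_
      rcases hφ with h1 | h1
      · exact absurd (by rw [h1, smul_zero]) h0
      · refine le_ordn d n _ k h0 ?_
        intro u hu
        exact le_trans h1 (ordn_le d n φ u (suppS_smul d c φ hu))

/-- The quotient module `p_k / p_{k+1}`. -/
abbrev grPiece (d : ℕ) (R : Subalgebra ℂ (MvPowerSeries (Fin d) ℂ)) (n : Fin d → ℕ)
    (k : ℕ) :=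
  ↥(pP d R n k) ⧸ (pP d R n (k + 1)).comap (pP d R n k).subtype

/-- `H_k`: the `ℂ`-span in `AddMonoidAlgebra ℂ Λ` of the monomials `X^u`
with `u ∈ Λ` and `⟨n,u⟩ = k`. -/
def HkSub (d : ℕ) (Λ : AddSubmonoid (Fin d → ℕ)) (n : Fin d → ℕ) (k : ℕ) :
    Submodule ℂ (AddMonoidAlgebra ℂ ↥Λ) :=
  Submodule.span ℂ {x | ∃ u : ↥Λ, wt n (u : Fin d → ℕ) = k ∧ x = AddMonoidAlgebra.single u 1}

/-- The maximal graded ideal `𝔪_Λ` of `AddMonoidAlgebra ℂ Λ`, spanned by the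
monomials `X^u` with `u ∈ Λ`, `u ≠ 0`. -/
def mIdl (d : ℕ) (Λ : AddSubmonoid (Fin d → ℕ)) : Ideal (AddMonoidAlgebra ℂ ↥Λ) :=
  Ideal.span {x | ∃ u : ↥Λ, u ≠ 0 ∧ x = AddMonoidAlgebra.single u 1}

/-- The family `e` of `ℂ`-linear isomorphisms `p_k/p_{k+1} ≃ H_k` realizes the canonical
graded isomorphism `gr R ≅ ℂ[Λ]`: each `e k` sends the class of `φ` to its `n`-initial
form `in_n φ` (and the zero class to `0`), and the family is unital and multiplicative
with respect to the multiplication induced by that of `R`. -/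
def IsGradedInitialFormIso (d : ℕ) (R : Subalgebra ℂ (MvPowerSeries (Fin d) ℂ))
    (Λ : AddSubmonoid (Fin d → ℕ)) (n : Fin d → ℕ)
    (e : ∀ k : ℕ, grPiece d R n k ≃ₗ[ℂ] ↥(HkSub d Λ n k)) : Prop :=
  (∀ (k : ℕ) (φ : MvPowerSeries (Fin d) ℂ) (hφ : φ ∈ pP d R n k),
      (fun u : ↥Λ =>
        ((e k (Submodule.Quotient.mk ⟨φ, hφ⟩) : ↥(HkSub d Λ n k)) :
          AddMonoidAlgebra ℂ ↥Λ).coeff u) =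
        fun u : ↥Λ => if wt n (u : Fin d → ℕ) = k then coeffFun d φ (u : Fin d → ℕ) else 0) ∧
  (∀ (k l : ℕ) (φ ψ : MvPowerSeries (Fin d) ℂ) (hφ : φ ∈ pP d R n k)
      (hψ : ψ ∈ pP d R n l) (hφψ : φ * ψ ∈ pP d R n (k + l)),
      ((e (k + l) (Submodule.Quotient.mk ⟨φ * ψ, hφψ⟩) : ↥(HkSub d Λ n (k + l))) :
          AddMonoidAlgebra ℂ ↥Λ) =
        ((e k (Submodule.Quotient.mk ⟨φ, hφ⟩) : ↥(HkSub d Λ n k)) : AddMonoidAlgebra ℂ ↥Λ) *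
        ((e l (Submodule.Quotient.mk ⟨ψ, hψ⟩) : ↥(HkSub d Λ n l)) : AddMonoidAlgebra ℂ ↥Λ)) ∧
  (∀ h1 : (1 : MvPowerSeries (Fin d) ℂ) ∈ pP d R n 0,
      ((e 0 (Submodule.Quotient.mk ⟨1, h1⟩) : ↥(HkSub d Λ n 0)) : AddMonoidAlgebra ℂ ↥Λ) =
        1)

section Aux

open Finset

lemma wt_add' {d : ℕ} (n u v : Fin d → ℕ) : wt n (u + v) = wt n u + wt n v := by
  simp [wt, Pi.add_apply, Nat.mul_add, Finset.sum_add_distrib]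

lemma wt_zero' {d : ℕ} (n : Fin d → ℕ) : wt n (0 : Fin d → ℕ) = 0 := by simp [wt]

/-- `wt n` as an `AddMonoidHom` on all of `Fin d → ℕ`. -/
def wtHom' (d : ℕ) (n : Fin d → ℕ) : (Fin d → ℕ) →+ ℕ where
  toFun u := wt n u
  map_zero' := wt_zero' n
  map_add' u v := wt_add' n u v

/-- `wt n` as an `AddMonoidHom` on `↥Λ`. -/
def wtHom (d : ℕ) (Λ : AddSubmonoid (Fin d → ℕ)) (n : Fin d → ℕ) : ↥Λ →+ ℕ :=
  (wtHom' d n).comp Λ.subtype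

lemma mem_pP_iff {d : ℕ} {R : Subalgebra ℂ (MvPowerSeries (Fin d) ℂ)} {n : Fin d → ℕ} {k : ℕ}
    {φ : MvPowerSeries (Fin d) ℂ} :
    φ ∈ pP d R n k ↔ φ ∈ R ∧ (φ = 0 ∨ k ≤ ordn d n φ) := Iff.rfl

lemma mem_RL_iff {d : ℕ} {Λ : AddSubmonoid (Fin d → ℕ)} {φ : MvPowerSeries (Fin d) ℂ} :
    φ ∈ RL d Λ ↔ suppS d φ ⊆ (Λ : Set (Fin d → ℕ)) := Iff.rfl

lemma symm_add {d : ℕ} (x y : Fin d → ℕ) :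
    (Finsupp.equivFunOnFinite.symm (x + y) : Fin d →₀ ℕ)
      = Finsupp.equivFunOnFinite.symm x + Finsupp.equivFunOnFinite.symm y := by
  ext i
  simp

lemma HkSub_eq_gradeBy (d : ℕ) (Λ : AddSubmonoid (Fin d → ℕ)) (n : Fin d → ℕ) (k : ℕ) :
    HkSub d Λ n k = AddMonoidAlgebra.gradeBy ℂ (⇑(wtHom d Λ n)) k := by
  apply le_antisymm
  · rw [HkSub, Submodule.span_le]
    rintro x ⟨u, hu, rfl⟩
    intro m hm
    have h := Finsupp.support_single_subset hm
    rw [Finset.mem_singleton] at h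
    subst h
    exact hu
  · intro a ha
    rw [← AddMonoidAlgebra.sum_coeff_single a, Finsupp.sum]
    apply Submodule.sum_mem
    intro u hu
    have h1 : AddMonoidAlgebra.single u (a.coeff u) = (a.coeff u) • AddMonoidAlgebra.single u (1 : ℂ) := by
      rw [AddMonoidAlgebra.smul_single', mul_one]
    rw [h1]
    exact Submodule.smul_mem _ _ (Submodule.subset_span ⟨u, ha u hu, rfl⟩)

lemma Sk_finite {d : ℕ} {Λ : AddSubmonoid (Fin d → ℕ)} (hΛ : Λ.FG) {n : Fin d → ℕ}
    (hn : ∀ u ∈ Λ, u ≠ (0 : Fin d → ℕ) → 0 < wt n u) (k : ℕ) :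
    {u : ↥Λ | wt n (u : Fin d → ℕ) = k}.Finite := by
  classical
  obtain ⟨s, hs⟩ := hΛ
  have key : (Subtype.val '' {u : ↥Λ | wt n (u : Fin d → ℕ) = k}).Finite := by
    apply Set.Finite.subset ((Set.finite_Iic (k • s.val)).image Multiset.sum)
    rintro x ⟨u, hu, rfl⟩
    have hx : (u : Fin d → ℕ) ∈ AddSubmonoid.closure (s : Set (Fin d → ℕ)) := by
      rw [hs]; exact u.2
    obtain ⟨l, hl, hsum⟩ := AddSubmonoid.exists_multiset_of_mem_closure hx
    set l' : Multiset (Fin d → ℕ) := l.filter (fun g => g ≠ 0) with hl'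
    have hsplit : l' + l.filter (fun g => ¬ g ≠ 0) = l := Multiset.filter_add_not _ _
    have hzero : (l.filter (fun g => ¬ g ≠ 0)).sum = 0 := by
      apply Multiset.sum_eq_zero
      intro x hx
      have := Multiset.of_mem_filter hx
      simpa using this
    have hsum' : l'.sum = (u : Fin d → ℕ) := by
      have := congrArg Multiset.sum hsplit
      rw [Multiset.sum_add, hzero, add_zero] at this
      rw [this, hsum]
    have hwt : (l'.map (wt n)).sum = k := by
      have h := map_multiset_sum (wtHom' d n) l'
      rw [hsum', show (wtHom' d n) (u : Fin d → ℕ) = k from hu] at h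
      exact h.symm
    have hcard : l'.card ≤ k := by
      have h1 : ∀ x ∈ l', 1 ≤ wt n x := by
        intro x hxl
        have hmem : x ∈ l := Multiset.mem_of_mem_filter hxl
        have hne : x ≠ 0 := by
          have := Multiset.of_mem_filter hxl
          simpa using this
        have hxΛ : x ∈ Λ := by
          rw [← hs]
          exact AddSubmonoid.subset_closure (hl x hmem)
        exact hn x hxΛ hne
      calc l'.card = (l'.map (fun _ => 1)).sum := by
            simp [Multiset.map_const']
        _ ≤ (l'.map (wt n)).sum := by
            apply Multiset.sum_map_le_sum_map
            intro x hxl; exact h1 x hxl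
        _ = k := hwt
    refine ⟨l', ?_, hsum'⟩
    rw [Set.mem_Iic, Multiset.le_iff_count]
    intro a
    rw [Multiset.count_nsmul]
    by_cases ha : a ∈ l'
    · have has : a ∈ s := by
        have := hl a (Multiset.mem_of_mem_filter ha)
        exact this
      have h1 : 1 ≤ Multiset.count a s.val := by
        rw [Nat.one_le_iff_ne_zero, Ne, Multiset.count_eq_zero]
        simpa using has
      calc Multiset.count a l' ≤ l'.card := Multiset.count_le_card _ _
        _ ≤ k := hcard
        _ = k * 1 := (mul_one k).symm
        _ ≤ k * Multiset.count a s.val := Nat.mul_le_mul_left k h1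
    · rw [Multiset.count_eq_zero_of_notMem ha]
      exact Nat.zero_le _
  exact Set.Finite.of_finite_image key (Set.injOn_of_injective Subtype.val_injective)

end Aux

section Ini

variable {d : ℕ} {Λ : AddSubmonoid (Fin d → ℕ)} {n : Fin d → ℕ}

/-- The `n`-initial form in degree `k` of a power series, as an element of
`AddMonoidAlgebra ℂ ↥Λ`. -/
def iniF (Λ : AddSubmonoid (Fin d → ℕ)) (n : Fin d → ℕ) (k : ℕ)
    (hfin : {u : ↥Λ | wt n (u : Fin d → ℕ) = k}.Finite)
    (φ : MvPowerSeries (Fin d) ℂ) : AddMonoidAlgebra ℂ ↥Λ :=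
  AddMonoidAlgebra.ofCoeff (Finsupp.onFinset hfin.toFinset
    (fun u => if wt n (u : Fin d → ℕ) = k then coeffFun d φ (u : Fin d → ℕ) else 0)
    (fun u h => by
      rw [Set.Finite.mem_toFinset]
      by_contra hc
      exact h (if_neg hc)))

lemma iniF_apply {k : ℕ} (hfin : {u : ↥Λ | wt n (u : Fin d → ℕ) = k}.Finite)
    (φ : MvPowerSeries (Fin d) ℂ) (u : ↥Λ) :
    (iniF Λ n k hfin φ).coeff u
      = if wt n (u : Fin d → ℕ) = k then coeffFun d φ (u : Fin d → ℕ) else 0 := rfl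

lemma symm_zero' {d : ℕ} : (Finsupp.equivFunOnFinite.symm (0 : Fin d → ℕ)) = (0 : Fin d →₀ ℕ) := by
  ext i
  simp

lemma symm_eq_zero' {d : ℕ} {x : Fin d → ℕ} (h : Finsupp.equivFunOnFinite.symm x = (0 : Fin d →₀ ℕ)) :
    x = 0 := by
  have := congrArg Finsupp.equivFunOnFinite h
  rw [Equiv.apply_symm_apply] at this
  rw [this]
  rfl

lemma coeffFun_add (φ ψ : MvPowerSeries (Fin d) ℂ) (u : Fin d → ℕ) :
    coeffFun d (φ + ψ) u = coeffFun d φ u + coeffFun d ψ u := by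
  simp [coeffFun, map_add]

lemma coeffFun_smul (c : ℂ) (φ : MvPowerSeries (Fin d) ℂ) (u : Fin d → ℕ) :
    coeffFun d (c • φ) u = c * coeffFun d φ u := by
  simp [coeffFun]

/-- The `n`-initial form in degree `k` as a `ℂ`-linear map. -/
def iniL (Λ : AddSubmonoid (Fin d → ℕ)) (n : Fin d → ℕ) (k : ℕ)
    (hfin : {u : ↥Λ | wt n (u : Fin d → ℕ) = k}.Finite) :
    MvPowerSeries (Fin d) ℂ →ₗ[ℂ] AddMonoidAlgebra ℂ ↥Λ where
  toFun := iniF Λ n k hfin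
  map_add' φ ψ := AddMonoidAlgebra.ext <| Finsupp.ext fun u => by
    have h1 : (iniF Λ n k hfin φ + iniF Λ n k hfin ψ).coeff u
        = (iniF Λ n k hfin φ).coeff u + (iniF Λ n k hfin ψ).coeff u := rfl
    show (iniF Λ n k hfin (φ + ψ)).coeff u = _
    rw [h1, iniF_apply, iniF_apply, iniF_apply]
    by_cases h : wt n (u : Fin d → ℕ) = k
    · rw [if_pos h, if_pos h, if_pos h, coeffFun_add]
    · rw [if_neg h, if_neg h, if_neg h, add_zero]
  map_smul' c φ := by
    have key : iniF Λ n k hfin (c • φ) = c • iniF Λ n k hfin φ := AddMonoidAlgebra.ext <| Finsupp.ext fun u => by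
      have h1 : (c • iniF Λ n k hfin φ).coeff u = c * (iniF Λ n k hfin φ).coeff u := rfl
      rw [h1, iniF_apply, iniF_apply]
      by_cases h : wt n (u : Fin d → ℕ) = k
      · rw [if_pos h, if_pos h, coeffFun_smul]
      · rw [if_neg h, if_neg h, mul_zero]
    exact key

lemma iniF_mem {k : ℕ} (hfin : {u : ↥Λ | wt n (u : Fin d → ℕ) = k}.Finite)
    (φ : MvPowerSeries (Fin d) ℂ) : iniF Λ n k hfin φ ∈ HkSub d Λ n k := by
  rw [HkSub_eq_gradeBy]
  intro m hm
  simp only [iniF, AddMonoidAlgebra.coeff_ofCoeff] at hm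
  have h := Finsupp.support_onFinset_subset hm
  rw [Set.Finite.mem_toFinset] at h
  exact h

lemma iniF_support {k : ℕ} (hfin : {u : ↥Λ | wt n (u : Fin d → ℕ) = k}.Finite)
    (φ : MvPowerSeries (Fin d) ℂ) {u : ↥Λ} (hu : u ∈ (iniF Λ n k hfin φ).coeff.support) :
    wt n (u : Fin d → ℕ) = k ∧ coeffFun d φ (u : Fin d → ℕ) ≠ 0 := by
  have h := Finsupp.mem_support_iff.1 hu
  rw [iniF_apply] at h
  by_cases hw : wt n (u : Fin d → ℕ) = k
  · rw [if_pos hw] at h; exact ⟨hw, h⟩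
  · rw [if_neg hw] at h; exact absurd rfl h

lemma iniF_eq_zero_iff {k : ℕ} (hfin : {u : ↥Λ | wt n (u : Fin d → ℕ) = k}.Finite)
    {φ : MvPowerSeries (Fin d) ℂ} (hφ : φ ∈ pP d (RL d Λ) n k) :
    iniF Λ n k hfin φ = 0 ↔ φ ∈ pP d (RL d Λ) n (k + 1) := by
  constructor
  · intro hz
    refine ⟨hφ.1, ?_⟩
    by_cases h0 : φ = 0
    · exact Or.inl h0
    · refine Or.inr (le_ordn d n φ (k + 1) h0 ?_)
      intro u hu
      have huΛ : u ∈ Λ := hφ.1 hu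
      have hk : k ≤ wt n u := by
        rcases hφ.2 with h | h
        · exact absurd h h0
        · exact le_trans h (ordn_le d n φ u hu)
      rcases lt_or_eq_of_le hk with h | h
      · exact h
      · exfalso
        have h2 : (iniF Λ n k hfin φ).coeff (⟨u, huΛ⟩ : ↥Λ) = 0 := by rw [hz]; rfl
        rw [iniF_apply, if_pos h.symm] at h2
        exact hu h2
  · intro hm
    ext u
    rw [iniF_apply]
    by_cases hw : wt n (u : Fin d → ℕ) = k
    · rw [if_pos hw]
      by_contra hc
      have hsupp : (u : Fin d → ℕ) ∈ suppS d φ := hc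
      have h0 : φ ≠ 0 := by
        rintro rfl
        exact hc (by simp [coeffFun])
      have hord : k + 1 ≤ ordn d n φ := by
        rcases hm.2 with h | h
        · exact absurd h h0
        · exact h
      have := le_trans hord (ordn_le d n φ _ hsupp)
      omega
    · rw [if_neg hw]; rfl

/-- The monomial `X^u`. -/
def monom (d : ℕ) (u : Fin d → ℕ) : MvPowerSeries (Fin d) ℂ :=
  MvPowerSeries.monomial (R := ℂ) (Finsupp.equivFunOnFinite.symm u) 1

lemma coeffFun_monom (u v : Fin d → ℕ) :
    coeffFun d (monom d u) v = if v = u then 1 else 0 := by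
  rw [coeffFun, monom, MvPowerSeries.coeff_monomial]
  congr 1
  simp only [eq_iff_iff]
  constructor
  · intro h
    have := congrArg Finsupp.equivFunOnFinite h
    simpa using this
  · intro h; rw [h]

lemma monom_mem_pP {u : Fin d → ℕ} (hu : u ∈ Λ) :
    monom d u ∈ pP d (RL d Λ) n (wt n u) := by
  have hsupp : suppS d (monom d u) ⊆ {u} := by
    intro v hv
    have h : coeffFun d (monom d u) v ≠ 0 := hv
    rw [coeffFun_monom] at h
    by_contra hc
    exact h (if_neg (by simpa using hc))
  constructor
  · exact fun v hv => by
      have := hsupp hv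
      rw [Set.mem_singleton_iff] at this
      rw [this]; exact hu
  · refine Or.inr (le_ordn d n _ _ ?_ ?_)
    · intro h
      have : coeffFun d (monom d u) u = 0 := by rw [h]; simp [coeffFun]
      rw [coeffFun_monom, if_pos rfl] at this
      exact one_ne_zero this
    · intro v hv
      have := hsupp hv
      rw [Set.mem_singleton_iff] at this
      rw [this]

lemma iniF_monom {k : ℕ} (hfin : {u : ↥Λ | wt n (u : Fin d → ℕ) = k}.Finite)
    (u : ↥Λ) (hu : wt n (u : Fin d → ℕ) = k) :
    iniF Λ n k hfin (monom d (u : Fin d → ℕ)) = AddMonoidAlgebra.single u 1 := by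
  ext v
  rw [iniF_apply, coeffFun_monom, AddMonoidAlgebra.coeff_single_apply]
  by_cases h : v = u
  · subst h
    rw [if_pos hu, if_pos rfl, if_pos rfl]
  · have hvu : (v : Fin d → ℕ) ≠ (u : Fin d → ℕ) := fun hc => h (Subtype.ext hc)
    have huv : ¬ (u = v) := fun hc => h hc.symm
    by_cases hw : wt n (v : Fin d → ℕ) = k
    · rw [if_pos hw, if_neg hvu, if_neg huv]
    · rw [if_neg hw, if_neg huv]

lemma iniF_one (hfin : {u : ↥Λ | wt n (u : Fin d → ℕ) = 0}.Finite) :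
    iniF Λ n 0 hfin (1 : MvPowerSeries (Fin d) ℂ) = 1 := by
  ext v
  rw [iniF_apply]
  rw [AddMonoidAlgebra.one_def, AddMonoidAlgebra.coeff_single_apply]
  have hcoeff : coeffFun d (1 : MvPowerSeries (Fin d) ℂ) (v : Fin d → ℕ)
      = if (v : Fin d → ℕ) = 0 then 1 else 0 := by
    rw [coeffFun, MvPowerSeries.coeff_one]
    by_cases hv0 : (v : Fin d → ℕ) = 0
    · rw [if_pos (by rw [hv0]; exact symm_zero'), if_pos hv0]
    · rw [if_neg (fun hc => hv0 (symm_eq_zero' hc)), if_neg hv0]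
  by_cases h : v = 0
  · subst h
    have h0 : ((0 : ↥Λ) : Fin d → ℕ) = (0 : Fin d → ℕ) := rfl
    rw [h0] at hcoeff ⊢
    rw [if_pos (wt_zero' n), hcoeff, if_pos rfl, if_pos rfl]
  · have hv : (v : Fin d → ℕ) ≠ 0 := by
      intro hc
      exact h (Subtype.ext hc)
    rw [if_neg (fun hc : (0 : ↥Λ) = v => h hc.symm)]
    by_cases hw : wt n (v : Fin d → ℕ) = 0
    · rw [if_pos hw, hcoeff, if_neg hv]
    · rw [if_neg hw]

end Ini

section Mul

variable {d : ℕ} {Λ : AddSubmonoid (Fin d → ℕ)} {n : Fin d → ℕ}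

lemma coeffFun_apply' (φ : MvPowerSeries (Fin d) ℂ) (x : Fin d →₀ ℕ) :
    MvPowerSeries.coeff (R := ℂ) x φ = coeffFun d φ (Finsupp.equivFunOnFinite x) := by
  rw [coeffFun, Equiv.symm_apply_apply]

lemma equivFun_add' {d : ℕ} (x y : Fin d →₀ ℕ) :
    Finsupp.equivFunOnFinite (x + y)
      = Finsupp.equivFunOnFinite x + Finsupp.equivFunOnFinite y := by
  ext i; simp

lemma iniF_mul {k l : ℕ}
    (hfk : {u : ↥Λ | wt n (u : Fin d → ℕ) = k}.Finite)
    (hfl : {u : ↥Λ | wt n (u : Fin d → ℕ) = l}.Finite)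
    (hfkl : {u : ↥Λ | wt n (u : Fin d → ℕ) = k + l}.Finite)
    {φ ψ : MvPowerSeries (Fin d) ℂ}
    (hφ : φ ∈ pP d (RL d Λ) n k) (hψ : ψ ∈ pP d (RL d Λ) n l) :
    iniF Λ n (k + l) hfkl (φ * ψ) = iniF Λ n k hfk φ * iniF Λ n l hfl ψ := by
  classical
  ext w
  set f := iniF Λ n k hfk φ with hf
  set g := iniF Λ n l hfl ψ with hg
  have hmul : (f * g).coeff w
      = ∑ a ∈ (f.coeff.support ×ˢ g.coeff.support).filter (fun a => a.1 + a.2 = w),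
          f.coeff a.1 * g.coeff a.2 := by
    rw [AddMonoidAlgebra.coeff_mul]
    simp only [Finsupp.sum]
    rw [← Finset.sum_product', ← Finset.sum_filter]
  rw [hmul, iniF_apply]
  by_cases hw : wt n (w : Fin d → ℕ) = k + l
  · rw [if_pos hw, coeffFun, MvPowerSeries.coeff_mul]
    have hres : ∑ p ∈ Finset.HasAntidiagonal.antidiagonal (Finsupp.equivFunOnFinite.symm (w : Fin d → ℕ)),
          MvPowerSeries.coeff (R := ℂ) p.1 φ * MvPowerSeries.coeff (R := ℂ) p.2 ψ
        = ∑ p ∈ (Finset.HasAntidiagonal.antidiagonal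
              (Finsupp.equivFunOnFinite.symm (w : Fin d → ℕ))).filter
              (fun p => MvPowerSeries.coeff (R := ℂ) p.1 φ ≠ 0 ∧ MvPowerSeries.coeff (R := ℂ) p.2 ψ ≠ 0),
            MvPowerSeries.coeff (R := ℂ) p.1 φ * MvPowerSeries.coeff (R := ℂ) p.2 ψ := by
      rw [Finset.sum_filter_of_ne]
      intro p hp hne
      exact ⟨left_ne_zero_of_mul hne, right_ne_zero_of_mul hne⟩
    rw [hres]
    symm
    apply Finset.sum_bij (fun (a : ↥Λ × ↥Λ)
        (_ : a ∈ (f.coeff.support ×ˢ g.coeff.support).filter (fun a => a.1 + a.2 = w)) =>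
        ((Finsupp.equivFunOnFinite.symm (a.1 : Fin d → ℕ)),
          (Finsupp.equivFunOnFinite.symm (a.2 : Fin d → ℕ))))
    · -- hi : lands in the filtered antidiagonal
      intro a ha
      rw [Finset.mem_filter, Finset.mem_product] at ha
      obtain ⟨⟨ha1, ha2⟩, hsum⟩ := ha
      obtain ⟨hw1, hc1⟩ := iniF_support hfk φ ha1
      obtain ⟨hw2, hc2⟩ := iniF_support hfl ψ ha2
      rw [Finset.mem_filter, Finset.HasAntidiagonal.mem_antidiagonal]
      refine ⟨?_, ?_, ?_⟩
      · rw [← symm_add]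
        congr 1
        have := congrArg (Subtype.val) hsum
        exact this
      · rw [← coeffFun]; exact hc1
      · rw [← coeffFun]; exact hc2
    · -- injectivity
      intro a₁ ha₁ a₂ ha₂ h
      have h1 := congrArg Prod.fst h
      have h2 := congrArg Prod.snd h
      simp only at h1 h2
      have e1 : (a₁.1 : Fin d → ℕ) = (a₂.1 : Fin d → ℕ) :=
        Finsupp.equivFunOnFinite.symm.injective h1
      have e2 : (a₁.2 : Fin d → ℕ) = (a₂.2 : Fin d → ℕ) :=
        Finsupp.equivFunOnFinite.symm.injective h2
      exact Prod.ext (Subtype.ext e1) (Subtype.ext e2)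
    · -- surjectivity
      intro p hp
      rw [Finset.mem_filter, Finset.HasAntidiagonal.mem_antidiagonal] at hp
      obtain ⟨hpa, hc1, hc2⟩ := hp
      have hφ0 : φ ≠ 0 := fun h => hc1 (by rw [h]; simp)
      have hψ0 : ψ ≠ 0 := fun h => hc2 (by rw [h]; simp)
      have hs1 : Finsupp.equivFunOnFinite p.1 ∈ suppS d φ := by
        show coeffFun d φ _ ≠ 0
        rw [← coeffFun_apply']; exact hc1
      have hs2 : Finsupp.equivFunOnFinite p.2 ∈ suppS d ψ := by
        show coeffFun d ψ _ ≠ 0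
        rw [← coeffFun_apply']; exact hc2
      have hm1 : Finsupp.equivFunOnFinite p.1 ∈ Λ := hφ.1 hs1
      have hm2 : Finsupp.equivFunOnFinite p.2 ∈ Λ := hψ.1 hs2
      have hordφ : k ≤ ordn d n φ := hφ.2.resolve_left hφ0
      have hordψ : l ≤ ordn d n ψ := hψ.2.resolve_left hψ0
      have hk1 : k ≤ wt n (Finsupp.equivFunOnFinite p.1) :=
        le_trans hordφ (ordn_le d n φ _ hs1)
      have hl2 : l ≤ wt n (Finsupp.equivFunOnFinite p.2) :=
        le_trans hordψ (ordn_le d n ψ _ hs2)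
      have hsum : Finsupp.equivFunOnFinite p.1 + Finsupp.equivFunOnFinite p.2
          = (w : Fin d → ℕ) := by
        rw [← equivFun_add', hpa, Equiv.apply_symm_apply]
      have htot : wt n (Finsupp.equivFunOnFinite p.1)
          + wt n (Finsupp.equivFunOnFinite p.2) = k + l := by
        rw [← wt_add', hsum, hw]
      have hwk : wt n (Finsupp.equivFunOnFinite p.1) = k := by omega
      have hwl : wt n (Finsupp.equivFunOnFinite p.2) = l := by omega
      refine ⟨(⟨Finsupp.equivFunOnFinite p.1, hm1⟩, ⟨Finsupp.equivFunOnFinite p.2, hm2⟩),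
        ?_, ?_⟩
      · rw [Finset.mem_filter, Finset.mem_product]
        refine ⟨⟨?_, ?_⟩, ?_⟩
        · rw [Finsupp.mem_support_iff, hf, iniF_apply]
          rw [if_pos hwk]
          exact hs1
        · rw [Finsupp.mem_support_iff, hg, iniF_apply]
          rw [if_pos hwl]
          exact hs2
        · exact Subtype.ext hsum
      · exact Prod.ext (Equiv.symm_apply_apply _ _) (Equiv.symm_apply_apply _ _)
    · -- values agree
      intro a ha
      rw [Finset.mem_filter, Finset.mem_product] at ha
      obtain ⟨⟨ha1, ha2⟩, _⟩ := ha
      obtain ⟨hw1, hc1⟩ := iniF_support hfk φ ha1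
      obtain ⟨hw2, hc2⟩ := iniF_support hfl ψ ha2
      have e1 : f.coeff a.1 = coeffFun d φ (a.1 : Fin d → ℕ) := by
        rw [hf, iniF_apply, if_pos hw1]
      have e2 : g.coeff a.2 = coeffFun d ψ (a.2 : Fin d → ℕ) := by
        rw [hg, iniF_apply, if_pos hw2]
      rw [e1, e2, coeffFun, coeffFun]
  · rw [if_neg hw]
    symm
    apply Finset.sum_eq_zero
    intro a ha
    rw [Finset.mem_filter, Finset.mem_product] at ha
    obtain ⟨⟨ha1, ha2⟩, hsum⟩ := ha
    obtain ⟨hw1, _⟩ := iniF_support hfk φ ha1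
    obtain ⟨hw2, _⟩ := iniF_support hfl ψ ha2
    exfalso
    apply hw
    have hcoe : (a.1 : Fin d → ℕ) + (a.2 : Fin d → ℕ) = (w : Fin d → ℕ) := by
      have := congrArg Subtype.val hsum
      exact this
    rw [← hw1, ← hw2, ← wt_add', hcoe]

end Mul

section Assemble

variable {d : ℕ} {Λ : AddSubmonoid (Fin d → ℕ)} {n : Fin d → ℕ}

/-- The initial-form map on `p_k`, into `AddMonoidAlgebra ℂ ↥Λ`. -/
def Lmap (Λ : AddSubmonoid (Fin d → ℕ)) (n : Fin d → ℕ) (k : ℕ)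
    (hfin : {u : ↥Λ | wt n (u : Fin d → ℕ) = k}.Finite) :
    ↥(pP d (RL d Λ) n k) →ₗ[ℂ] AddMonoidAlgebra ℂ ↥Λ :=
  (iniL Λ n k hfin).comp (pP d (RL d Λ) n k).subtype

lemma ker_Lmap (k : ℕ) (hfin : {u : ↥Λ | wt n (u : Fin d → ℕ) = k}.Finite) :
    LinearMap.ker (Lmap Λ n k hfin)
      = (pP d (RL d Λ) n (k + 1)).comap (pP d (RL d Λ) n k).subtype := by
  ext x
  rw [LinearMap.mem_ker, Submodule.mem_comap]
  exact iniF_eq_zero_iff hfin x.2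

lemma range_Lmap (k : ℕ) (hfin : {u : ↥Λ | wt n (u : Fin d → ℕ) = k}.Finite) :
    LinearMap.range (Lmap Λ n k hfin) = HkSub d Λ n k := by
  apply le_antisymm
  · rintro x ⟨y, rfl⟩
    exact iniF_mem hfin y.val
  · rw [HkSub, Submodule.span_le]
    rintro x ⟨u, hu, rfl⟩
    exact ⟨⟨monom d (u : Fin d → ℕ), by rw [← hu]; exact monom_mem_pP u.2⟩,
      iniF_monom hfin u hu⟩

/-- The canonical isomorphism `p_k/p_{k+1} ≃ H_k`. -/
def eIso (k : ℕ) (hfin : {u : ↥Λ | wt n (u : Fin d → ℕ) = k}.Finite) :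
    grPiece d (RL d Λ) n k ≃ₗ[ℂ] ↥(HkSub d Λ n k) :=
  (Submodule.quotEquivOfEq _ _ (ker_Lmap k hfin).symm).trans
    ((LinearMap.quotKerEquivRange (Lmap Λ n k hfin)).trans
      (LinearEquiv.ofEq _ _ (range_Lmap k hfin)))

lemma eIso_mk (k : ℕ) (hfin : {u : ↥Λ | wt n (u : Fin d → ℕ) = k}.Finite)
    (φ : MvPowerSeries (Fin d) ℂ) (hφ : φ ∈ pP d (RL d Λ) n k) :
    ((eIso k hfin (Submodule.Quotient.mk ⟨φ, hφ⟩) : ↥(HkSub d Λ n k)) :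
        AddMonoidAlgebra ℂ ↥Λ)
      = iniF Λ n k hfin φ := by
  rw [eIso]
  simp only [LinearEquiv.trans_apply, Submodule.quotEquivOfEq_mk]
  rw [LinearEquiv.coe_ofEq_apply]
  exact LinearMap.quotKerEquivRange_apply_mk _ _

lemma mul_single_mem (d : ℕ) (Λ : AddSubmonoid (Fin d → ℕ))
    (r : AddMonoidAlgebra ℂ ↥Λ) (u : ↥Λ) (hu : u ≠ 0) :
    r * AddMonoidAlgebra.single u 1 ∈
      Submodule.span ℂ {x | ∃ u : ↥Λ, u ≠ 0 ∧ x = AddMonoidAlgebra.single u 1} := by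
  induction r using AddMonoidAlgebra.induction with
  | zero => rw [zero_mul]; exact Submodule.zero_mem _
  | single_add v c rest hvs hc ih =>
      rw [add_mul]
      refine Submodule.add_mem _ ?_ ih
      have h1 : (AddMonoidAlgebra.single v c : AddMonoidAlgebra ℂ ↥Λ)
            * AddMonoidAlgebra.single u 1
          = AddMonoidAlgebra.single (v + u) c := by
        rw [AddMonoidAlgebra.single_mul_single, mul_one]
      rw [h1]
      have hvu : v + u ≠ 0 := by
        intro h
        apply hu
        have hcoe : (v : Fin d → ℕ) + (u : Fin d → ℕ) = 0 := by
          have h4 : ((v + u : ↥Λ) : Fin d → ℕ) = ((0 : ↥Λ) : Fin d → ℕ) :=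
            congrArg Subtype.val h
          rw [AddSubmonoid.coe_add, ZeroMemClass.coe_zero] at h4
          exact h4
        have h2 : (u : Fin d → ℕ) = 0 := by
          funext i
          have h3 := congrFun hcoe i
          simp only [Pi.add_apply, Pi.zero_apply] at h3
          show (u : Fin d → ℕ) i = 0
          omega
        exact Subtype.ext h2
      have h2 : (AddMonoidAlgebra.single (v + u) c : AddMonoidAlgebra ℂ ↥Λ)
          = c • AddMonoidAlgebra.single (v + u) (1 : ℂ) := by
        rw [AddMonoidAlgebra.smul_single', mul_one]
      rw [h2]
      exact Submodule.smul_mem _ _ (Submodule.subset_span ⟨v + u, hvu, rfl⟩)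

end Assemble

/-- for `Λ` finitely generated and `n` of positive weight on `Λ \ {0}`, the
associated graded ring `gr(R_Λ) = ⨁ p_k/p_{k+1}` is isomorphic, as a graded `ℂ`-algebra,
to `AddMonoidAlgebra ℂ Λ` with the grading by the pieces `H_k`: there is a family of
`ℂ`-linear isomorphisms `p_k/p_{k+1} ≃ H_k` given by `n`-initial forms, compatible with
the induced multiplication and unit (`IsGradedInitialFormIso`), the `H_k` really form a
grading of `ℂ[Λ]` (internal direct sum), and the maximal graded ideal `⨁_{k ≥ 1}` is
carried onto the maximal graded ideal `𝔪_Λ`, i.e. `⨆_{k ≥ 1} H_k = 𝔪_Λ`. -/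
theorem gr_toric (d : ℕ) (hd : 1 ≤ d) (Λ : AddSubmonoid (Fin d → ℕ)) (hΛ : Λ.FG)
    (n : Fin d → ℕ) (hn : ∀ u ∈ Λ, u ≠ (0 : Fin d → ℕ) → 0 < wt n u) :
    ∃ e : ∀ k : ℕ, grPiece d (RL d Λ) n k ≃ₗ[ℂ] ↥(HkSub d Λ n k),
      IsGradedInitialFormIso d (RL d Λ) Λ n e ∧
      DirectSum.IsInternal (fun k : ℕ => HkSub d Λ n k) ∧
      ((⨆ k : ℕ, ⨆ _ : 1 ≤ k, HkSub d Λ n k : Submodule ℂ (AddMonoidAlgebra ℂ ↥Λ)) :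
          Set (AddMonoidAlgebra ℂ ↥Λ)) =
        (mIdl d Λ : Set (AddMonoidAlgebra ℂ ↥Λ)) := by
    classical
  have hfin : ∀ k : ℕ, {u : ↥Λ | wt n (u : Fin d → ℕ) = k}.Finite :=
    fun k => Sk_finite hΛ hn k
  refine ⟨fun k => eIso k (hfin k), ⟨?_, ?_, ?_⟩, ?_, ?_⟩
  · intro k φ hφ
    funext u
    rw [eIso_mk k (hfin k) φ hφ, iniF_apply]
  · intro k l φ ψ hφ hψ hφψ
    rw [eIso_mk, eIso_mk, eIso_mk, iniF_mul (hfin k) (hfin l) (hfin (k + l)) hφ hψ]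
  · intro h1
    rw [eIso_mk, iniF_one]
  · have h : (fun k : ℕ => HkSub d Λ n k)
        = fun k => AddMonoidAlgebra.gradeBy ℂ (⇑(wtHom d Λ n)) k :=
      funext (HkSub_eq_gradeBy d Λ n)
    rw [h]
    exact AddMonoidAlgebra.gradeBy.isInternal (wtHom d Λ n)
  · set M : Submodule ℂ (AddMonoidAlgebra ℂ ↥Λ) :=
      Submodule.span ℂ {x | ∃ u : ↥Λ, u ≠ 0 ∧ x = AddMonoidAlgebra.single u 1} with hM
    have hTM : (⨆ k : ℕ, ⨆ _ : 1 ≤ k, HkSub d Λ n k) = M := by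
      apply le_antisymm
      · apply iSup_le
        intro k
        apply iSup_le
        intro hk
        rw [HkSub, Submodule.span_le]
        rintro x ⟨u, hu, rfl⟩
        apply Submodule.subset_span
        refine ⟨u, ?_, rfl⟩
        intro h0
        rw [h0] at hu
        have h00 : wt n ((0 : ↥Λ) : Fin d → ℕ) = 0 := wt_zero' n
        omega
      · rw [hM, Submodule.span_le]
        rintro x ⟨u, hu, rfl⟩
        have hu' : (u : Fin d → ℕ) ≠ 0 := fun h => hu (Subtype.ext h)
        have hpos : 1 ≤ wt n (u : Fin d → ℕ) := hn _ u.2 hu'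
        have hmem : AddMonoidAlgebra.single u (1 : ℂ) ∈ HkSub d Λ n (wt n (u : Fin d → ℕ)) :=
          Submodule.subset_span ⟨u, rfl, rfl⟩
        exact Submodule.mem_iSup_of_mem (wt n (u : Fin d → ℕ))
          (Submodule.mem_iSup_of_mem hpos hmem)
    have hMI : ∀ x, x ∈ M ↔ x ∈ mIdl d Λ := by
      have hsub : M ≤ Submodule.restrictScalars ℂ (mIdl d Λ) := by
        rw [hM, Submodule.span_le]
        rintro x ⟨u, hu, rfl⟩
        exact Ideal.subset_span ⟨u, hu, rfl⟩
      have hclosed : ∀ (r : AddMonoidAlgebra ℂ ↥Λ) (x : AddMonoidAlgebra ℂ ↥Λ),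
          x ∈ M → r * x ∈ M := by
        intro r x hx
        induction hx using Submodule.span_induction with
        | mem y hy =>
            obtain ⟨u, hu, rfl⟩ := hy
            exact mul_single_mem d Λ r u hu
        | zero => rw [mul_zero]; exact Submodule.zero_mem _
        | add y z _ _ hy hz => rw [mul_add]; exact Submodule.add_mem _ hy hz
        | smul c y _ hy => rw [mul_smul_comm]; exact Submodule.smul_mem _ c hy
      intro x
      constructor
      · exact fun h => hsub h
      · intro h
        rw [mIdl] at h
        induction h using Submodule.span_induction with
        | mem y hy =>
            obtain ⟨u, hu, rfl⟩ := hy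
            exact Submodule.subset_span ⟨u, hu, rfl⟩
        | zero => exact Submodule.zero_mem _
        | add y z _ _ hy hz => exact Submodule.add_mem _ hy hz
        | smul r y _ hy => rw [smul_eq_mul]; exact hclosed r y hy
    rw [hTM]
    ext x
    simp only [SetLike.mem_coe]
    exact hMI x
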